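/- arXiv:0908.3596 — 3 statements merged into one kernel-verified Lean document; each statement's English description precedes it below -/
import Mathlib

section
/- Let ξ be standard normal and r ≥ 0. There exist constants 0 < c'_2(r) < c_2(r) such that for all z ≥ 1: c'_2(r) z^{r-1/2} e^{-z} ≤ E[|ξ|^{2r} 1(ξ² > 2z)] ≤ c_2(r) z^{r-1/2} e^{-z}. -/
open MeasureTheory ProbabilityTheory
open scoped NNReal

open Set Real
open scoped ENNReal

namespace GaussTruncAux

lemma integral_Ioi_shift (f : ℝ → ℝ) (a : ℝ) :
    ∫ x in Ioi a, f x = ∫ v in Ioi (0:ℝ), f (v + a) := by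
  rw [← integral_indicator measurableSet_Ioi, ← integral_indicator measurableSet_Ioi,
    ← integral_add_right_eq_self (fun x => (Ioi a).indicator f x) a]
  congr 1
  ext x
  by_cases hx : 0 < x
  · simp [Set.indicator_apply, Set.mem_Ioi, hx, show a < x + a by linarith]
  · simp [Set.indicator_apply, Set.mem_Ioi, hx, show ¬ a < x + a by
      push_neg at hx ⊢; linarith]

lemma integral_Ioi_affine {f : ℝ → ℝ} {a : ℝ} (ha : 0 < a) :
    ∫ x in Ioi a, f x = a⁻¹ * ∫ v in Ioi (0:ℝ), f (a + a⁻¹ * v) := by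
  rw [integral_Ioi_shift f a]
  have h := integral_comp_mul_left_Ioi (fun v => f (v + a)) 0 (inv_pos.mpr ha)
  simp only [mul_zero, smul_eq_mul, inv_inv] at h
  have h2 : (fun v : ℝ => f (a + a⁻¹ * v)) = fun v : ℝ => f (a⁻¹ * v + a) := by
    funext v; rw [add_comm]
  rw [h2, h, ← mul_assoc, inv_mul_cancel₀ (ne_of_gt ha), one_mul]

lemma Kint {p : ℝ} (hp : 0 ≤ p) :
    IntegrableOn (fun v : ℝ => (1+v) ^ p * Real.exp (-v)) (Ioi (0:ℝ)) := by
  have h1 : IntegrableOn (fun v : ℝ => Real.exp (-v) * v ^ p) (Ioi (0:ℝ)) := by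
    simpa using Real.GammaIntegral_convergent (s := p + 1) (by linarith)
  have h2 : IntegrableOn (fun v : ℝ => Real.exp (-v)) (Ioi (0:ℝ)) := by
    simpa using exp_neg_integrableOn_Ioi 0 one_pos
  refine Integrable.mono' ((h2.const_mul ((2:ℝ)^p)).add (h1.const_mul ((2:ℝ)^p))) ?_ ?_
  · apply Continuous.aestronglyMeasurable
    exact ((continuous_const.add continuous_id).rpow_const (fun x => Or.inr hp)).mul
      (Real.continuous_exp.comp continuous_neg)
  · filter_upwards [ae_restrict_mem measurableSet_Ioi] with v hv
    have hv0 : (0:ℝ) < v := hv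
    simp only [Pi.add_apply]
    rw [Real.norm_eq_abs, abs_of_nonneg (by positivity)]
    rcases le_total v 1 with hv1 | hv1
    · have hb : (1+v) ^ p ≤ (2:ℝ) ^ p :=
        Real.rpow_le_rpow (by linarith) (by linarith) hp
      have : (1+v) ^ p * Real.exp (-v) ≤ (2:ℝ)^p * Real.exp (-v) :=
        mul_le_mul_of_nonneg_right hb (Real.exp_pos _).le
      have hpos : 0 ≤ (2:ℝ)^p * (Real.exp (-v) * v ^ p) := by positivity
      linarith
    · have hb : (1+v) ^ p ≤ (2:ℝ)^p * v ^ p := by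
        rw [← Real.mul_rpow (by norm_num) (by linarith)]
        exact Real.rpow_le_rpow (by linarith) (by linarith) hp
      have : (1+v) ^ p * Real.exp (-v) ≤ (2:ℝ)^p * (Real.exp (-v) * v ^ p) := by
        calc (1+v) ^ p * Real.exp (-v) ≤ ((2:ℝ)^p * v ^ p) * Real.exp (-v) :=
              mul_le_mul_of_nonneg_right hb (Real.exp_pos _).le
          _ = (2:ℝ)^p * (Real.exp (-v) * v ^ p) := by ring
      have hpos : 0 ≤ (2:ℝ)^p * Real.exp (-v) := by positivity
      linarith

lemma tail_bounds {p a : ℝ} (hp : 0 ≤ p) (ha : 1 ≤ a) :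
    Real.exp (-(3/2)) * (a ^ (p - 1) * Real.exp (-(1/2) * a ^ 2))
        ≤ ∫ x in Ioi a, x ^ p * Real.exp (-(1/2) * x ^ 2) ∧
      ∫ x in Ioi a, x ^ p * Real.exp (-(1/2) * x ^ 2)
        ≤ (∫ v in Ioi (0:ℝ), (1+v) ^ p * Real.exp (-v))
            * (a ^ (p - 1) * Real.exp (-(1/2) * a ^ 2)) := by
  have ha0 : 0 < a := lt_of_lt_of_le one_pos ha
  have hainv : a⁻¹ ≤ 1 := by
    nlinarith [mul_inv_cancel₀ (ne_of_gt ha0), inv_pos.mpr ha0]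
  have hainv0 : 0 < a⁻¹ := inv_pos.mpr ha0
  have hiv : a * a⁻¹ = 1 := mul_inv_cancel₀ (ne_of_gt ha0)
  set C : ℝ := a ^ p * Real.exp (-(1/2) * a ^ 2) with hC
  have hC0 : 0 < C := by positivity
  rw [integral_Ioi_affine ha0]
  set h : ℝ → ℝ := fun v => (a + a⁻¹ * v) ^ p * Real.exp (-(1/2) * (a + a⁻¹ * v) ^ 2) with hh
  set K : ℝ := ∫ v in Ioi (0:ℝ), (1+v) ^ p * Real.exp (-v) with hKdef
  have key_ub : ∀ v ∈ Ioi (0:ℝ), h v ≤ C * ((1+v) ^ p * Real.exp (-v)) := by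
    intro v hv
    have hv0 : (0:ℝ) < v := hv
    have hb0 : (0:ℝ) < a + a⁻¹ * v := by positivity
    have h1 : (a + a⁻¹ * v) ^ p ≤ a ^ p * (1+v) ^ p := by
      rw [← Real.mul_rpow ha0.le (by linarith)]
      apply Real.rpow_le_rpow hb0.le ?_ hp
      nlinarith
    have h3 : a * a⁻¹ * v = v := by rw [hiv, one_mul]
    have h2 : Real.exp (-(1/2) * (a + a⁻¹ * v) ^ 2)
        ≤ Real.exp (-(1/2) * a ^ 2) * Real.exp (-v) := by
      rw [← Real.exp_add]
      apply Real.exp_le_exp.mpr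
      nlinarith [sq_nonneg (a⁻¹ * v)]
    calc h v ≤ (a ^ p * (1+v) ^ p) * (Real.exp (-(1/2) * a ^ 2) * Real.exp (-v)) := by
          apply mul_le_mul h1 h2 (Real.exp_pos _).le (by positivity)
      _ = C * ((1+v) ^ p * Real.exp (-v)) := by rw [hC]; ring
  have key_lb : ∀ v ∈ Ioc (0:ℝ) 1, C * Real.exp (-(3/2)) ≤ h v := by
    intro v hv
    obtain ⟨hv0, hv1⟩ := hv
    have h1 : a ^ p ≤ (a + a⁻¹ * v) ^ p :=
      Real.rpow_le_rpow ha0.le (by nlinarith) hp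
    have h3 : a * a⁻¹ * v = v := by rw [hiv, one_mul]
    have h4 : a⁻¹ * v ≤ 1 := by nlinarith
    have h5 : (a⁻¹ * v) ^ 2 ≤ 1 := by nlinarith
    have h2 : Real.exp (-(1/2) * a ^ 2) * Real.exp (-(3/2))
        ≤ Real.exp (-(1/2) * (a + a⁻¹ * v) ^ 2) := by
      rw [← Real.exp_add]
      apply Real.exp_le_exp.mpr
      nlinarith
    calc C * Real.exp (-(3/2))
        = a ^ p * (Real.exp (-(1/2) * a ^ 2) * Real.exp (-(3/2))) := by rw [hC]; ring
      _ ≤ (a + a⁻¹ * v) ^ p * Real.exp (-(1/2) * (a + a⁻¹ * v) ^ 2) := by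
          apply mul_le_mul h1 h2 (by positivity) (by positivity)
  have hcont : Continuous h := by
    have c1 : Continuous fun v : ℝ => a + a⁻¹ * v :=
      continuous_const.add (continuous_const.mul continuous_id)
    exact (c1.rpow_const (fun x => Or.inr hp)).mul
      (Real.continuous_exp.comp (continuous_const.mul (c1.pow 2)))
  have hK := Kint hp
  have hIntH : IntegrableOn h (Ioi (0:ℝ)) := by
    refine Integrable.mono' (hK.const_mul C) hcont.aestronglyMeasurable ?_
    filter_upwards [ae_restrict_mem measurableSet_Ioi] with v hv
    have hb0 : (0:ℝ) < a + a⁻¹ * v := by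
      have : (0:ℝ) < v := hv; positivity
    rw [Real.norm_eq_abs, abs_of_nonneg (by positivity)]
    exact key_ub v hv
  have hup : ∫ v in Ioi (0:ℝ), h v ≤ C * K := by
    calc ∫ v in Ioi (0:ℝ), h v
        ≤ ∫ v in Ioi (0:ℝ), C * ((1+v) ^ p * Real.exp (-v)) :=
          setIntegral_mono_on hIntH (hK.const_mul C) measurableSet_Ioi key_ub
      _ = C * K := integral_const_mul C _
  have hlo : Real.exp (-(3/2)) * C ≤ ∫ v in Ioi (0:ℝ), h v := by
    have step1 : Real.exp (-(3/2)) * C = ∫ _v in Ioc (0:ℝ) 1, C * Real.exp (-(3/2)) := by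
      rw [setIntegral_const]
      rw [measureReal_def, Real.volume_Ioc]
      norm_num [mul_comm]
    have step2 : ∫ _v in Ioc (0:ℝ) 1, C * Real.exp (-(3/2)) ≤ ∫ v in Ioc (0:ℝ) 1, h v := by
      refine setIntegral_mono_on ?_ (hIntH.mono_set Ioc_subset_Ioi_self) measurableSet_Ioc key_lb
      exact integrableOn_const (by rw [Real.volume_Ioc]; norm_num)
    have step3 : ∫ v in Ioc (0:ℝ) 1, h v ≤ ∫ v in Ioi (0:ℝ), h v := by
      apply setIntegral_mono_set hIntH ?_ Ioc_subset_Ioi_self.eventuallyLE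
      filter_upwards [ae_restrict_mem measurableSet_Ioi] with v hv
      have : (0:ℝ) < v := hv
      have hb0 : (0:ℝ) < a + a⁻¹ * v := by positivity
      positivity
    linarith
  have hpa : a ^ (p - 1) = a⁻¹ * a ^ p := by
    rw [Real.rpow_sub ha0, Real.rpow_one]
    field_simp
  constructor
  · calc Real.exp (-(3/2)) * (a ^ (p-1) * Real.exp (-(1/2) * a ^ 2))
        = a⁻¹ * (Real.exp (-(3/2)) * C) := by rw [hpa, hC]; ring
      _ ≤ a⁻¹ * ∫ v in Ioi (0:ℝ), h v := by
          exact mul_le_mul_of_nonneg_left hlo hainv0.le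
  · calc a⁻¹ * ∫ v in Ioi (0:ℝ), h v
        ≤ a⁻¹ * (C * K) := mul_le_mul_of_nonneg_left hup hainv0.le
      _ = K * (a ^ (p-1) * Real.exp (-(1/2) * a ^ 2)) := by rw [hpa, hC]; ring

lemma gauss_eq (p : ℝ) (S : Set ℝ) (hS : MeasurableSet S) :
    ∫ x in S, |x| ^ p ∂(gaussianReal 0 1)
      = (Real.sqrt (2 * Real.pi))⁻¹ * ∫ x in S, |x| ^ p * Real.exp (-(1/2) * x ^ 2) := by
  rw [gaussianReal_of_var_ne_zero 0 one_ne_zero]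
  have hpdf : (gaussianPDF 0 1)
      = fun x => ((Real.toNNReal (gaussianPDFReal 0 1 x) : ℝ≥0) : ℝ≥0∞) := by
    funext x
    rw [gaussianPDF, ENNReal.ofReal]
  rw [hpdf, setIntegral_withDensity_eq_setIntegral_smul
    ((measurable_gaussianPDFReal 0 1).real_toNNReal) (fun x => |x| ^ p) hS]
  rw [← integral_const_mul]
  refine setIntegral_congr_fun hS ?_
  intro x _
  have hcoe : ((Real.toNNReal (gaussianPDFReal 0 1 x) : ℝ≥0) : ℝ)
      = gaussianPDFReal 0 1 x := Real.coe_toNNReal _ (gaussianPDFReal_nonneg 0 1 x)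
  dsimp only
  rw [NNReal.smul_def, smul_eq_mul, hcoe, gaussianPDFReal]
  have h1 : -(x - 0) ^ 2 / (2 * ((1:ℝ≥0):ℝ)) = -(1/2) * x ^ 2 := by
    push_cast
    ring
  push_cast
  rw [show -(x - 0) ^ 2 / (2 * (1:ℝ)) = -(1/2) * x ^ 2 by ring]
  ring

end GaussTruncAux

open GaussTruncAux in
/-- Truncated Gaussian moments: for `ξ` standard normal and `r ≥ 0` there exist constants
`0 < c'_2(r) < c_2(r)` such that for all `z ≥ 1`,
`c'_2 z^{r-1/2} e^{-z} ≤ E[|ξ|^{2r} 1(ξ² > 2z)] ≤ c_2 z^{r-1/2} e^{-z}`. -/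
theorem gaussian_truncated_moment_bounds (r : ℝ) (hr : 0 ≤ r) :
    ∃ c₂' c₂ : ℝ, 0 < c₂' ∧ c₂' < c₂ ∧
      ∀ z : ℝ, 1 ≤ z →
        c₂' * z ^ (r - 1 / 2) * Real.exp (-z)
            ≤ ∫ x in {x : ℝ | x ^ 2 > 2 * z}, |x| ^ (2 * r) ∂(gaussianReal 0 1)
          ∧ ∫ x in {x : ℝ | x ^ 2 > 2 * z}, |x| ^ (2 * r) ∂(gaussianReal 0 1)
            ≤ c₂ * z ^ (r - 1 / 2) * Real.exp (-z) := by
  classical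
  have hp : (0:ℝ) ≤ 2 * r := by linarith
  set K : ℝ := ∫ v in Ioi (0:ℝ), (1+v) ^ (2*r) * Real.exp (-v) with hKdef
  have hK1 : 1 ≤ K := by
    have h2 : IntegrableOn (fun v : ℝ => Real.exp (-v)) (Ioi (0:ℝ)) := by
      simpa using exp_neg_integrableOn_Ioi 0 one_pos
    have : ∫ v in Ioi (0:ℝ), Real.exp (-v) ≤ K := by
      refine setIntegral_mono_on h2 (Kint hp) measurableSet_Ioi ?_
      intro v hv
      have hv0 : (0:ℝ) < v := hv
      have h1 : (1:ℝ) ≤ (1+v) ^ (2*r) := Real.one_le_rpow (by linarith) hp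
      nlinarith [Real.exp_pos (-v)]
    rwa [integral_exp_neg_Ioi_zero] at this
  have hsqrt : 0 < Real.sqrt (2 * Real.pi) := Real.sqrt_pos.mpr (by positivity)
  set c0 : ℝ := (Real.sqrt (2 * Real.pi))⁻¹ * 2 * (2:ℝ) ^ (r - 1/2) with hc0def
  have hc0 : 0 < c0 := by positivity
  refine ⟨c0 * Real.exp (-(3/2)), c0 * K, by positivity, ?_, ?_⟩
  · have : Real.exp (-(3/2)) < 1 := Real.exp_lt_one_iff.mpr (by norm_num)
    exact mul_lt_mul_of_pos_left (lt_of_lt_of_le this hK1) hc0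
  intro z hz
  have hz0 : (0:ℝ) < z := lt_of_lt_of_le one_pos hz
  have h2z : (0:ℝ) ≤ 2 * z := by linarith
  set a : ℝ := Real.sqrt (2 * z) with ha_def
  have ha1 : (1:ℝ) ≤ a := by
    rw [ha_def, show (1:ℝ) = Real.sqrt 1 by simp]
    exact Real.sqrt_le_sqrt (by linarith)
  have ha0 : 0 < a := lt_of_lt_of_le one_pos ha1
  have hsq : a ^ 2 = 2 * z := Real.sq_sqrt h2z
  -- set equality
  have hSeq : {x : ℝ | x ^ 2 > 2 * z} = Iio (-a) ∪ Ioi a := by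
    ext x
    simp only [Set.mem_setOf_eq, Set.mem_union, Set.mem_Iio, Set.mem_Ioi]
    rw [← hsq]
    constructor
    · intro h
      by_contra hcon
      push_neg at hcon
      obtain ⟨h1, h2⟩ := hcon
      nlinarith
    · rintro (h | h) <;> nlinarith
  set φ : ℝ → ℝ := fun x => |x| ^ (2*r) * Real.exp (-(1/2) * x ^ 2) with hφ
  -- integrability of φ on Ioi a
  have hIntf : IntegrableOn (fun x : ℝ => x ^ (2*r) * Real.exp (-(1/2) * x ^ 2)) (Ioi (0:ℝ)) := by
    have := integrableOn_rpow_mul_exp_neg_mul_sq (b := 1/2) (by norm_num) (s := 2*r)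
      (by linarith)
    simpa [neg_mul] using this
  have hφIoi : IntegrableOn φ (Ioi a) := by
    refine (hIntf.mono_set (Ioi_subset_Ioi ha0.le)).congr_fun ?_ measurableSet_Ioi
    intro x hx
    have : 0 < x := lt_trans ha0 hx
    rw [hφ]
    simp [abs_of_pos this]
  have hφIio : IntegrableOn φ (Iio (-a)) := by
    have heven : (φ ∘ (Neg.neg : ℝ → ℝ)) = φ := by
      funext x
      simp [hφ, abs_neg, neg_sq]
    have := (MeasurePreserving.integrableOn_comp_preimage
      (Measure.measurePreserving_neg (volume : Measure ℝ))
      (Homeomorph.neg ℝ).measurableEmbedding (f := φ) (s := Ioi a)).2 hφIoi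
    have hpre : ((Neg.neg : ℝ → ℝ) ⁻¹' Ioi a) = Iio (-a) := by
      ext x
      simp only [Set.mem_preimage, Set.mem_Ioi, Set.mem_Iio]
      constructor
      · intro h; linarith
      · intro h; linarith
    rwa [heven, hpre] at this
  -- symmetry
  have hsym : ∫ x in Iio (-a), φ x = ∫ x in Ioi a, φ x := by
    have h1 : ∫ x in Ioi a, φ (-x) = ∫ x in Iic (-a), φ x := integral_comp_neg_Ioi a φ
    have h2 : ∀ x : ℝ, φ (-x) = φ x := by
      intro x; simp [hφ, abs_neg, neg_sq]
    simp_rw [h2] at h1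
    rw [← integral_Iic_eq_integral_Iio]
    exact h1.symm
  -- split the integral
  have hdisj : Disjoint (Iio (-a)) (Ioi a) := by
    rw [Set.disjoint_left]
    intro x hx1 hx2
    simp only [Set.mem_Iio] at hx1
    simp only [Set.mem_Ioi] at hx2
    linarith
  have hsplit : ∫ x in Iio (-a) ∪ Ioi a, φ x = 2 * ∫ x in Ioi a, φ x := by
    rw [setIntegral_union hdisj measurableSet_Ioi hφIio hφIoi, hsym]
    ring
  -- reduce φ to f on Ioi a
  have hφf : ∫ x in Ioi a, φ x = ∫ x in Ioi a, x ^ (2*r) * Real.exp (-(1/2) * x ^ 2) := by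
    refine setIntegral_congr_fun measurableSet_Ioi ?_
    intro x hx
    have : (0:ℝ) < x := lt_trans ha0 hx
    simp [hφ, abs_of_pos this]
  -- main identity
  have hSmeas : MeasurableSet {x : ℝ | x ^ 2 > 2 * z} := by
    rw [hSeq]; exact measurableSet_Iio.union measurableSet_Ioi
  have hEeq : ∫ x in {x : ℝ | x ^ 2 > 2 * z}, |x| ^ (2*r) ∂(gaussianReal 0 1)
      = (Real.sqrt (2 * Real.pi))⁻¹
          * (2 * ∫ x in Ioi a, x ^ (2*r) * Real.exp (-(1/2) * x ^ 2)) := by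
    rw [gauss_eq (2*r) _ hSmeas, hSeq]
    rw [show (∫ x in Iio (-a) ∪ Ioi a, |x| ^ (2*r) * Real.exp (-(1/2) * x ^ 2)) =
      ∫ x in Iio (-a) ∪ Ioi a, φ x from rfl, hsplit, hφf]
  -- tail bounds
  obtain ⟨hlow, hupp⟩ := tail_bounds (p := 2*r) (a := a) hp ha1
  -- identify the weight
  have hw : a ^ (2*r - 1) * Real.exp (-(1/2) * a ^ 2)
      = (2:ℝ) ^ (r - 1/2) * z ^ (r - 1/2) * Real.exp (-z) := by
    have h1 : a ^ (2*r - 1) = (2:ℝ) ^ (r - 1/2) * z ^ (r - 1/2) := by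
      rw [ha_def, Real.sqrt_eq_rpow, ← Real.rpow_mul h2z,
        show (1:ℝ) / 2 * (2*r - 1) = r - 1/2 by ring,
        Real.mul_rpow (by norm_num) hz0.le]
    have h2 : -(1/2) * a ^ 2 = -z := by rw [hsq]; ring
    rw [h1, h2]
  -- final assembly
  constructor
  · calc c0 * Real.exp (-(3/2)) * z ^ (r - 1 / 2) * Real.exp (-z)
        = ((Real.sqrt (2 * Real.pi))⁻¹ * 2)
            * (Real.exp (-(3/2)) * (a ^ (2*r - 1) * Real.exp (-(1/2) * a ^ 2))) := by
          rw [hw, hc0def]; ring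
      _ ≤ ((Real.sqrt (2 * Real.pi))⁻¹ * 2)
            * ∫ x in Ioi a, x ^ (2*r) * Real.exp (-(1/2) * x ^ 2) :=
          mul_le_mul_of_nonneg_left hlow (by positivity)
      _ = ∫ x in {x : ℝ | x ^ 2 > 2 * z}, |x| ^ (2*r) ∂(gaussianReal 0 1) := by
          rw [hEeq]; ring
  · calc ∫ x in {x : ℝ | x ^ 2 > 2 * z}, |x| ^ (2*r) ∂(gaussianReal 0 1)
        = ((Real.sqrt (2 * Real.pi))⁻¹ * 2)
            * ∫ x in Ioi a, x ^ (2*r) * Real.exp (-(1/2) * x ^ 2) := by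
          rw [hEeq]; ring
      _ ≤ ((Real.sqrt (2 * Real.pi))⁻¹ * 2)
            * (K * (a ^ (2*r - 1) * Real.exp (-(1/2) * a ^ 2))) :=
          mul_le_mul_of_nonneg_left hupp (by positivity)
      _ = c0 * K * z ^ (r - 1 / 2) * Real.exp (-z) := by
          rw [hw, hc0def]; ring
end

section
/- Let (ξ₁, ξ₂) be a centered Gaussian vector with unit variances and correlation ρ, and define Q_r(ρ, z) = E[|ξ₁|^{2r} 1(ξ₂²/2 > z)]. Then for any r > 0 and z ≥ 1, sup_ρ Q_r(ρ, z) ≤ (C₁(r) + C₂(r) z^r) z^{-1/2} e^{-z}, where C₁(r), C₂(r) depend only on r. -/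
open MeasureTheory ProbabilityTheory
set_option maxHeartbeats 1000000
open scoped NNReal ENNReal
open Real Set Filter

section AuxLemmas

-- (a+b)^p ≤ 2^p (a^p + b^p)
lemma aux_add_rpow {a b p : ℝ} (hp : 0 ≤ p) (ha : 0 ≤ a) (hb : 0 ≤ b) :
    (a + b) ^ p ≤ 2 ^ p * (a ^ p + b ^ p) := by
  have hm : a + b ≤ 2 * max a b := by
    rcases le_total a b with h | h
    · simp [max_eq_right h]; linarith
    · simp [max_eq_left h]; linarith
  have h0 : (0:ℝ) ≤ max a b := le_max_of_le_left ha
  calc (a + b) ^ p ≤ (2 * max a b) ^ p :=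
        Real.rpow_le_rpow (by linarith) hm hp
    _ = 2 ^ p * (max a b) ^ p := Real.mul_rpow (by norm_num) h0
    _ ≤ 2 ^ p * (a ^ p + b ^ p) := by
        gcongr
        rcases le_total a b with h | h
        · rw [max_eq_right h]
          nlinarith [Real.rpow_nonneg ha p, Real.rpow_nonneg hb p]
        · rw [max_eq_left h]
          nlinarith [Real.rpow_nonneg ha p, Real.rpow_nonneg hb p]

-- t^r ≤ (r/c)^r exp(c t)
lemma aux_rpow_le_exp {r c t : ℝ} (hr : 0 < r) (hc : 0 < c) (ht : 0 ≤ t) :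
    t ^ r ≤ (r / c) ^ r * Real.exp (c * t) := by
  have h1 : t = (c * t / r) * (r / c) := by field_simp
  have h2 : (0:ℝ) ≤ c * t / r := by positivity
  have h3 : c * t / r ≤ Real.exp (c * t / r) := by
    have := Real.add_one_le_exp (c * t / r); linarith
  calc t ^ r = (c * t / r) ^ r * (r / c) ^ r := by
        rw [← Real.mul_rpow h2 (by positivity), ← h1]
    _ ≤ (Real.exp (c * t / r)) ^ r * (r / c) ^ r := by
        gcongr
    _ = (r / c) ^ r * Real.exp (c * t) := by
        rw [← Real.exp_mul]
        have : c * t / r * r = c * t := by field_simp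
        rw [this, mul_comm]

lemma aux_ftc {a b c : ℝ} (hc : 0 < c) :
    ∫ x in Ioi a, x * Real.exp (b - c * x ^ 2) = Real.exp (b - c * a ^ 2) / (2 * c) := by
  have hderiv : ∀ x ∈ Ici a, HasDerivAt (fun x => -Real.exp (b - c * x ^ 2) / (2 * c))
      (x * Real.exp (b - c * x ^ 2)) x := by
    intro x _
    have h1 : HasDerivAt (fun x : ℝ => b - c * x ^ 2) (-(c * (2 * x))) x := by
      simpa using ((hasDerivAt_pow 2 x).const_mul c).const_sub b
    have h2 := (h1.exp.neg).div_const (2 * c)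
    convert h2 using 1
    all_goals first | rfl | (rw [eq_div_iff (by positivity)]; ring)
  have hint : IntegrableOn (fun x => x * Real.exp (b - c * x ^ 2)) (Ioi a) := by
    have : Integrable (fun x : ℝ => Real.exp b * (x * Real.exp (-c * x ^ 2))) :=
      (integrable_mul_exp_neg_mul_sq hc).const_mul _
    have heq : (fun x : ℝ => x * Real.exp (b - c * x ^ 2))
        = fun x => Real.exp b * (x * Real.exp (-c * x ^ 2)) := by
      ext x
      rw [show b - c * x ^ 2 = b + -c * x ^ 2 by ring, Real.exp_add]
      ring
    rw [heq]
    exact this.integrableOn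
  have htend : Tendsto (fun x => -Real.exp (b - c * x ^ 2) / (2 * c)) atTop (nhds 0) := by
    have h1 : Tendsto (fun x : ℝ => c * x ^ 2) atTop atTop :=
      (tendsto_pow_atTop two_ne_zero).const_mul_atTop hc
    have h2 : Tendsto (fun x : ℝ => b - c * x ^ 2) atTop atBot :=
      tendsto_atBot_add_const_left _ b (tendsto_neg_atBot_iff.mpr h1)
    have := ((Real.tendsto_exp_atBot.comp h2).neg).div_const (2 * c)
    simpa using this
  have := integral_Ioi_of_hasDerivAt_of_tendsto' hderiv hint htend
  rw [this]
  field_simp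
  ring

lemma aux_abs_rpow_eq (s x : ℝ) : |x| ^ (2 * s) = (x ^ 2) ^ s := by
  rw [← sq_abs, ← Real.rpow_natCast |x| 2, ← Real.rpow_mul (abs_nonneg x)]
  norm_num

lemma aux_integrable_abs_rpow_mul_exp {s c : ℝ} (hs : 0 < s) (hc : 0 < c) :
    Integrable (fun x : ℝ => |x| ^ (2 * s) * Real.exp (-c * x ^ 2)) := by
  have hmeas : AEStronglyMeasurable (fun x : ℝ => |x| ^ (2 * s) * Real.exp (-c * x ^ 2))
      (volume : Measure ℝ) := by
    apply Continuous.aestronglyMeasurable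
    exact ((Real.continuous_rpow_const (by positivity)).comp continuous_abs).mul
      (Real.continuous_exp.comp (by fun_prop))
  have hint : Integrable (fun x : ℝ => (s / (c / 2)) ^ s * Real.exp (-(c / 2) * x ^ 2)) :=
    (integrable_exp_neg_mul_sq (by positivity)).const_mul _
  refine hint.mono hmeas (ae_of_all _ fun x => ?_)
  have h1 : |x| ^ (2 * s) ≤ (s / (c / 2)) ^ s * Real.exp ((c / 2) * x ^ 2) := by
    rw [aux_abs_rpow_eq]
    exact aux_rpow_le_exp hs (by positivity) (sq_nonneg x)
  have h2 : (0:ℝ) ≤ |x| ^ (2 * s) := Real.rpow_nonneg (abs_nonneg x) _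
  have key : |x| ^ (2 * s) * Real.exp (-c * x ^ 2)
      ≤ (s / (c / 2)) ^ s * Real.exp (-(c / 2) * x ^ 2) := by
    calc |x| ^ (2 * s) * Real.exp (-c * x ^ 2)
        ≤ ((s / (c / 2)) ^ s * Real.exp ((c / 2) * x ^ 2)) * Real.exp (-c * x ^ 2) := by
          gcongr
      _ = (s / (c / 2)) ^ s * Real.exp (-(c / 2) * x ^ 2) := by
          rw [mul_assoc, ← Real.exp_add]; ring_nf
  have n1 : (0:ℝ) ≤ |x| ^ (2 * s) * Real.exp (-c * x ^ 2) :=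
    mul_nonneg h2 (Real.exp_nonneg _)
  have n2 : (0:ℝ) ≤ (s / (c / 2)) ^ s * Real.exp (-(c / 2) * x ^ 2) :=
    mul_nonneg (Real.rpow_nonneg (by positivity) _) (Real.exp_nonneg _)
  rw [Real.norm_eq_abs, Real.norm_eq_abs, abs_of_nonneg n1, abs_of_nonneg n2]
  exact key

-- transfer lemmas
lemma aux_gaussian_eq : gaussianReal 0 1
    = (volume : Measure ℝ).withDensity (fun x => ((gaussianPDFReal 0 1 x).toNNReal : ℝ≥0∞)) := by
  rw [gaussianReal_of_var_ne_zero 0 one_ne_zero]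
  rfl

lemma aux_meas_d : Measurable (fun x => (gaussianPDFReal 0 1 x).toNNReal) :=
  (measurable_gaussianPDFReal 0 1).real_toNNReal

lemma aux_smul_eq (g : ℝ → ℝ) (x : ℝ) :
    (gaussianPDFReal 0 1 x).toNNReal • g x = gaussianPDFReal 0 1 x * g x := by
  rw [NNReal.smul_def, smul_eq_mul, Real.coe_toNNReal _ (gaussianPDFReal_nonneg 0 1 x)]

lemma aux_setIntegral_gaussian (g : ℝ → ℝ) {S : Set ℝ} (hS : MeasurableSet S) :
    ∫ x in S, g x ∂(gaussianReal 0 1) = ∫ x in S, gaussianPDFReal 0 1 x * g x := by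
  rw [aux_gaussian_eq, setIntegral_withDensity_eq_setIntegral_smul aux_meas_d g hS]
  simp_rw [aux_smul_eq]

lemma aux_integrable_gaussian_iff (g : ℝ → ℝ) :
    Integrable g (gaussianReal 0 1)
      ↔ Integrable (fun x => gaussianPDFReal 0 1 x * g x) volume := by
  rw [aux_gaussian_eq, integrable_withDensity_iff_integrable_smul aux_meas_d]
  constructor
  · intro h; exact h.congr (ae_of_all _ fun x => aux_smul_eq g x)
  · intro h; exact h.congr (ae_of_all _ fun x => (aux_smul_eq g x).symm)

lemma aux_pdf_eq (x : ℝ) :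
    gaussianPDFReal 0 1 x = (Real.sqrt (2 * Real.pi))⁻¹ * Real.exp (-(x ^ 2 / 2)) := by
  simp [gaussianPDFReal]
  exact Or.inl (by ring)

lemma aux_int_ftc {b c : ℝ} (hc : 0 < c) :
    Integrable (fun x : ℝ => x * Real.exp (b - c * x ^ 2)) := by
  have h : Integrable (fun x : ℝ => Real.exp b * (x * Real.exp (-c * x ^ 2))) :=
    (integrable_mul_exp_neg_mul_sq hc).const_mul _
  have heq : (fun x : ℝ => x * Real.exp (b - c * x ^ 2))
      = fun x => Real.exp b * (x * Real.exp (-c * x ^ 2)) := by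
    ext x
    rw [show b - c * x ^ 2 = b + -c * x ^ 2 by ring, Real.exp_add]
    ring
  rw [heq]; exact h

lemma aux_tail (r : ℝ) (hr : 0 < r) {z : ℝ} (hz : 1 ≤ z) :
    ∫ x in {x : ℝ | x ^ 2 / 2 > z}, |x| ^ (2 * r) ∂(gaussianReal 0 1)
      ≤ (Real.sqrt (2 * Real.pi))⁻¹ * 4 ^ r * (2 * (z ^ r + 2 * (2 * r) ^ r))
        * (Real.sqrt (2 * z))⁻¹ * Real.exp (-z) := by
  have hz0 : (0:ℝ) < z := by linarith
  set a := Real.sqrt (2 * z) with ha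
  have ha0 : 0 < a := Real.sqrt_pos.mpr (by linarith)
  have ha2 : a ^ 2 = 2 * z := Real.sq_sqrt (by linarith)
  set S : Set ℝ := {x : ℝ | x ^ 2 / 2 > z} with hSdef
  have hS : MeasurableSet S := measurableSet_lt measurable_const (by fun_prop)
  set g : ℝ → ℝ := fun x =>
    |x| * (z ^ r * Real.exp (z - x ^ 2 / 2) + (2 * r) ^ r * Real.exp ((z - x ^ 2 / 2) / 2))
    with hgdef
  have hzr : (0:ℝ) ≤ z ^ r := Real.rpow_nonneg hz0.le r
  have h2r : (0:ℝ) ≤ (2 * r) ^ r := Real.rpow_nonneg (by positivity) r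
  have hg_nonneg : ∀ x, 0 ≤ g x := fun x => by
    apply mul_nonneg (abs_nonneg x)
    positivity
  -- global integrability of g
  have base : ∀ c : ℝ, 0 < c → Integrable (fun x : ℝ => |x| * Real.exp (-c * x ^ 2)) := by
    intro c hc
    have h := aux_integrable_abs_rpow_mul_exp (s := 1/2) (by norm_num) hc
    refine h.congr (ae_of_all _ fun x => ?_)
    norm_num [Real.rpow_one]
  have hg_int : Integrable g := by
    have h1 := ((base (1/2) (by norm_num)).const_mul (z ^ r * Real.exp z)).add
      ((base (1/4) (by norm_num)).const_mul ((2 * r) ^ r * Real.exp (z / 2)))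
    refine h1.congr (ae_of_all _ fun x => ?_)
    have e1 : Real.exp z * Real.exp (-(1/2 : ℝ) * x ^ 2) = Real.exp (z - x ^ 2 / 2) := by
      rw [← Real.exp_add]; ring_nf
    have e2 : Real.exp (z / 2) * Real.exp (-(1/4 : ℝ) * x ^ 2)
        = Real.exp ((z - x ^ 2 / 2) / 2) := by
      rw [← Real.exp_add]; ring_nf
    simp only [hgdef, Pi.add_apply]
    rw [← e1, ← e2]
    ring
  -- inclusion into two rays
  have hsub : S ⊆ Iic (-a) ∪ Ioi a := by
    intro x hx
    have hx2 : 2 * z < x ^ 2 := by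
      have : z < x ^ 2 / 2 := hx
      linarith
    have habs : a < |x| := by
      have h := Real.sqrt_lt_sqrt (by linarith) hx2
      rwa [Real.sqrt_sq_eq_abs] at h
    rcases lt_abs.mp habs with h | h
    · exact Or.inr h
    · exact Or.inl (by simp only [mem_Iic]; linarith)
  -- value of the integral on Ioi a
  have hIoi : ∫ x in Ioi a, g x = z ^ r * 1 + (2 * r) ^ r * 2 := by
    have hcong : ∫ x in Ioi a, g x
        = ∫ x in Ioi a, (z ^ r * (x * Real.exp (z - (1/2 : ℝ) * x ^ 2))
            + (2 * r) ^ r * (x * Real.exp (z / 2 - (1/4 : ℝ) * x ^ 2))) := by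
      refine setIntegral_congr_fun measurableSet_Ioi (fun x hx => ?_)
      have hxpos : 0 < x := lt_trans ha0 hx
      have e1 : Real.exp (z - x ^ 2 / 2) = Real.exp (z - (1/2 : ℝ) * x ^ 2) := by ring_nf
      have e2 : Real.exp ((z - x ^ 2 / 2) / 2)
          = Real.exp (z / 2 - (1/4 : ℝ) * x ^ 2) := by ring_nf
      simp only [hgdef]
      rw [abs_of_pos hxpos, e1, e2]
      ring
    rw [hcong, integral_add (((aux_int_ftc (b := z) (by norm_num : (0:ℝ) < 1/2)).const_mul
        _).integrableOn) (((aux_int_ftc (b := z / 2)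
        (by norm_num : (0:ℝ) < 1/4)).const_mul _).integrableOn),
      integral_const_mul, integral_const_mul, aux_ftc (by norm_num : (0:ℝ) < 1/2),
      aux_ftc (by norm_num : (0:ℝ) < 1/4), ha2]
    norm_num
    rw [show z - 1/2 * (2 * z) = 0 by ring, show z/2 - 1/4 * (2*z) = 0 by ring]
    norm_num
  -- reflection
  have hIic : ∫ x in Iic (-a), g x = ∫ x in Ioi a, g x := by
    rw [← integral_comp_neg_Ioi]
    refine setIntegral_congr_fun measurableSet_Ioi (fun x _ => ?_)
    simp only [hgdef, abs_neg, neg_sq]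
  -- total bound on ∫_S g
  have hSg : ∫ x in S, g x ≤ 2 * (z ^ r + 2 * (2 * r) ^ r) := by
    have h1 : ∫ x in S, g x ≤ ∫ x in Iic (-a) ∪ Ioi a, g x := by
      refine setIntegral_mono_set hg_int.integrableOn
        (ae_of_all _ hg_nonneg) (HasSubset.Subset.eventuallyLE hsub)
    have h2 : ∫ x in Iic (-a) ∪ Ioi a, g x
        = (∫ x in Iic (-a), g x) + ∫ x in Ioi a, g x :=
      setIntegral_union (Iic_disjoint_Ioi (by linarith)) measurableSet_Ioi
        hg_int.integrableOn hg_int.integrableOn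
    rw [h2, hIic, hIoi] at h1
    calc ∫ x in S, g x ≤ z ^ r * 1 + (2*r) ^ r * 2 + (z ^ r * 1 + (2*r) ^ r * 2) := h1
      _ = 2 * (z ^ r + 2 * (2 * r) ^ r) := by ring
  -- pointwise bound on S
  set C' : ℝ := (Real.sqrt (2 * Real.pi))⁻¹ * 4 ^ r * a⁻¹ * Real.exp (-z) with hC'
  have h4r : (0:ℝ) ≤ 4 ^ r := Real.rpow_nonneg (by norm_num) r
  have hpt : ∀ x ∈ S, gaussianPDFReal 0 1 x * |x| ^ (2 * r) ≤ C' * g x := by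
    intro x hx
    have hu : (0:ℝ) ≤ x ^ 2 / 2 - z := by
      have : z < x ^ 2 / 2 := hx
      linarith
    have habs : a ≤ |x| := by
      have hx2 : 2 * z < x ^ 2 := by
        have : z < x ^ 2 / 2 := hx
        linarith
      have h := Real.sqrt_lt_sqrt (by linarith) hx2
      rw [Real.sqrt_sq_eq_abs] at h
      exact h.le
    -- |x|^{2r} ≤ 4^r (z^r + (2r)^r e^{u/2})
    have key1 : |x| ^ (2 * r)
        ≤ 4 ^ r * (z ^ r + (2 * r) ^ r * Real.exp ((x ^ 2 / 2 - z) / 2)) := by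
      rw [aux_abs_rpow_eq]
      have step1 : (x ^ 2 : ℝ) ^ r ≤ 2 ^ r * ((2 * z) ^ r + (2 * (x ^ 2 / 2 - z)) ^ r) := by
        have := aux_add_rpow (a := 2 * z) (b := 2 * (x ^ 2 / 2 - z)) hr.le
          (by linarith) (by linarith)
        calc (x ^ 2 : ℝ) ^ r = (2 * z + 2 * (x ^ 2 / 2 - z)) ^ r := by ring_nf
          _ ≤ 2 ^ r * ((2 * z) ^ r + (2 * (x ^ 2 / 2 - z)) ^ r) := this
      have e2z : (2 * z : ℝ) ^ r = 2 ^ r * z ^ r := Real.mul_rpow (by norm_num) hz0.le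
      have e2u : (2 * (x ^ 2 / 2 - z) : ℝ) ^ r = 2 ^ r * (x ^ 2 / 2 - z) ^ r :=
        Real.mul_rpow (by norm_num) hu
      have eu : (x ^ 2 / 2 - z : ℝ) ^ r ≤ (2 * r) ^ r * Real.exp ((x ^ 2 / 2 - z) / 2) := by
        have h := aux_rpow_le_exp hr (by norm_num : (0:ℝ) < 1/2) hu
        have : (r / (1/2 : ℝ)) = 2 * r := by ring
        rw [this] at h
        calc (x ^ 2 / 2 - z : ℝ) ^ r ≤ (2*r) ^ r * Real.exp (1/2 * (x ^ 2 / 2 - z)) := h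
          _ = (2 * r) ^ r * Real.exp ((x ^ 2 / 2 - z) / 2) := by ring_nf
      have e4 : (4:ℝ) ^ r = 2 ^ r * 2 ^ r := by
        rw [← Real.mul_rpow (by norm_num) (by norm_num)]; norm_num
      have h2rp : (0:ℝ) ≤ 2 ^ r := Real.rpow_nonneg (by norm_num) r
      calc (x ^ 2 : ℝ) ^ r ≤ 2 ^ r * ((2 * z) ^ r + (2 * (x ^ 2 / 2 - z)) ^ r) := step1
        _ = 2 ^ r * 2 ^ r * (z ^ r + (x ^ 2 / 2 - z) ^ r) := by rw [e2z, e2u]; ring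
        _ ≤ 2 ^ r * 2 ^ r * (z ^ r + (2 * r) ^ r * Real.exp ((x ^ 2 / 2 - z) / 2)) := by
            have hq : (0:ℝ) ≤ 2 ^ r * 2 ^ r := by positivity
            apply mul_le_mul_of_nonneg_left _ hq
            linarith
        _ = 4 ^ r * (z ^ r + (2 * r) ^ r * Real.exp ((x ^ 2 / 2 - z) / 2)) := by rw [e4]
    -- exp algebra
    have t1 : Real.exp (-(x ^ 2 / 2)) = Real.exp (-z) * Real.exp (z - x ^ 2 / 2) := by
      rw [← Real.exp_add]; ring_nf
    have t2 : Real.exp (-(x ^ 2 / 2)) * Real.exp ((x ^ 2 / 2 - z) / 2)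
        = Real.exp (-z) * Real.exp ((z - x ^ 2 / 2) / 2) := by
      rw [← Real.exp_add, ← Real.exp_add]; ring_nf
    have E : Real.exp (-(x ^ 2 / 2)) * (z ^ r + (2 * r) ^ r * Real.exp ((x ^ 2 / 2 - z) / 2))
        = Real.exp (-z) * (z ^ r * Real.exp (z - x ^ 2 / 2)
            + (2 * r) ^ r * Real.exp ((z - x ^ 2 / 2) / 2)) := by
      calc Real.exp (-(x ^ 2 / 2)) * (z ^ r + (2 * r) ^ r * Real.exp ((x ^ 2 / 2 - z) / 2))
          = z ^ r * Real.exp (-(x ^ 2 / 2))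
            + (2 * r) ^ r * (Real.exp (-(x ^ 2 / 2)) * Real.exp ((x ^ 2 / 2 - z) / 2)) := by
            ring
        _ = z ^ r * (Real.exp (-z) * Real.exp (z - x ^ 2 / 2))
            + (2 * r) ^ r * (Real.exp (-z) * Real.exp ((z - x ^ 2 / 2) / 2)) := by
            rw [← t1, t2]
        _ = Real.exp (-z) * (z ^ r * Real.exp (z - x ^ 2 / 2)
            + (2 * r) ^ r * Real.exp ((z - x ^ 2 / 2) / 2)) := by ring
    have hone : 1 ≤ a⁻¹ * |x| := by
      rw [← div_eq_inv_mul]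
      exact (one_le_div ha0).mpr habs
    have hP : (0:ℝ) ≤ z ^ r * Real.exp (z - x ^ 2 / 2)
        + (2 * r) ^ r * Real.exp ((z - x ^ 2 / 2) / 2) := by positivity
    have hsq : (0:ℝ) ≤ (Real.sqrt (2 * Real.pi))⁻¹ := by positivity
    calc gaussianPDFReal 0 1 x * |x| ^ (2 * r)
        = (Real.sqrt (2 * Real.pi))⁻¹ * (Real.exp (-(x ^ 2 / 2)) * |x| ^ (2 * r)) := by
          rw [aux_pdf_eq]; ring
      _ ≤ (Real.sqrt (2 * Real.pi))⁻¹ * (Real.exp (-(x ^ 2 / 2))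
            * (4 ^ r * (z ^ r + (2 * r) ^ r * Real.exp ((x ^ 2 / 2 - z) / 2)))) := by
          apply mul_le_mul_of_nonneg_left _ hsq
          exact mul_le_mul_of_nonneg_left key1 (Real.exp_nonneg _)
      _ = (Real.sqrt (2 * Real.pi))⁻¹ * 4 ^ r * Real.exp (-z)
            * (z ^ r * Real.exp (z - x ^ 2 / 2)
                + (2 * r) ^ r * Real.exp ((z - x ^ 2 / 2) / 2)) := by
          rw [show Real.exp (-(x ^ 2 / 2))
              * (4 ^ r * (z ^ r + (2 * r) ^ r * Real.exp ((x ^ 2 / 2 - z) / 2)))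
              = 4 ^ r * (Real.exp (-(x ^ 2 / 2))
                * (z ^ r + (2 * r) ^ r * Real.exp ((x ^ 2 / 2 - z) / 2))) by ring, E]
          ring
      _ ≤ (Real.sqrt (2 * Real.pi))⁻¹ * 4 ^ r * Real.exp (-z)
            * ((a⁻¹ * |x|) * (z ^ r * Real.exp (z - x ^ 2 / 2)
                + (2 * r) ^ r * Real.exp ((z - x ^ 2 / 2) / 2))) := by
          have hc : (0:ℝ) ≤ (Real.sqrt (2 * Real.pi))⁻¹ * 4 ^ r * Real.exp (-z) := by
            positivity
          apply mul_le_mul_of_nonneg_left _ hc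
          nlinarith
      _ = C' * g x := by
          simp only [hC', hgdef]
          ring
  -- conclusion
  have hC'nonneg : 0 ≤ C' := by positivity
  calc ∫ x in S, |x| ^ (2 * r) ∂(gaussianReal 0 1)
      = ∫ x in S, gaussianPDFReal 0 1 x * |x| ^ (2 * r) :=
        aux_setIntegral_gaussian _ hS
    _ ≤ ∫ x in S, C' * g x := by
        refine integral_mono_of_nonneg (ae_of_all _ fun x => ?_)
          ((hg_int.const_mul C').integrableOn) ?_
        · exact mul_nonneg (gaussianPDFReal_nonneg 0 1 x)
            (Real.rpow_nonneg (abs_nonneg x) _)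
        · exact (ae_restrict_iff' hS).mpr (ae_of_all _ hpt)
    _ = C' * ∫ x in S, g x := integral_const_mul _ _
    _ ≤ C' * (2 * (z ^ r + 2 * (2 * r) ^ r)) := mul_le_mul_of_nonneg_left hSg hC'nonneg
    _ = (Real.sqrt (2 * Real.pi))⁻¹ * 4 ^ r * (2 * (z ^ r + 2 * (2 * r) ^ r))
        * (Real.sqrt (2 * z))⁻¹ * Real.exp (-z) := by
        simp only [hC']
        ring

end AuxLemmas

/-- `Q_r(ρ, z) = E[|ξ₁|^{2r} 1(ξ₂²/2 > z)]` for a centered Gaussian pair with unit variances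
and correlation `ρ`, realized via the decomposition `ξ₁ = ρ ξ₂ + √(1 - ρ²) ξ̃₁` with
`ξ₂, ξ̃₁` independent standard normal. -/
noncomputable def Qr (r ρ z : ℝ) : ℝ :=
  ∫ p in {p : ℝ × ℝ | p.1 ^ 2 / 2 > z},
    |ρ * p.1 + Real.sqrt (1 - ρ ^ 2) * p.2| ^ (2 * r)
      ∂((gaussianReal 0 1).prod (gaussianReal 0 1))

/-- Uniform upper bound on `Q_r(ρ, z)`: for `r > 0` there exist constants `C₁(r), C₂(r) > 0`
such that for every `z ≥ 1` and every correlation `ρ ∈ [-1, 1]`,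
`Q_r(ρ, z) ≤ (C₁ + C₂ z^r) z^{-1/2} e^{-z}`. -/
theorem Qr_upper_bound (r : ℝ) (hr : 0 < r) :
    ∃ C₁ C₂ : ℝ, 0 < C₁ ∧ 0 < C₂ ∧
      ∀ z : ℝ, 1 ≤ z → ∀ ρ : ℝ, ρ ∈ Set.Icc (-1 : ℝ) 1 →
        Qr r ρ z ≤ (C₁ + C₂ * z ^ r) * z ^ (-(1 / 2 : ℝ)) * Real.exp (-z) := by
  have hπ : (0:ℝ) < Real.pi := Real.pi_pos
  set γ := gaussianReal 0 1 with hγ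
  have hM_int : Integrable (fun x => |x| ^ (2 * r)) γ := by
    rw [hγ, aux_integrable_gaussian_iff]
    have h := (aux_integrable_abs_rpow_mul_exp (s := r) hr
      (by norm_num : (0:ℝ) < 1/2)).const_mul (Real.sqrt (2 * Real.pi))⁻¹
    refine h.congr (ae_of_all _ fun x => ?_)
    show (Real.sqrt (2 * Real.pi))⁻¹ * (|x| ^ (2 * r) * Real.exp (-(1/2 : ℝ) * x ^ 2))
      = gaussianPDFReal 0 1 x * |x| ^ (2 * r)
    rw [aux_pdf_eq, show -(x ^ 2 / 2) = -(1/2 : ℝ) * x ^ 2 by ring]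
    ring
  set M := ∫ x, |x| ^ (2 * r) ∂γ with hM
  have hM0 : 0 ≤ M := integral_nonneg fun x => Real.rpow_nonneg (abs_nonneg x) _
  have h2rpos : (0:ℝ) < 2 ^ (2 * r) := Real.rpow_pos_of_pos two_pos _
  have h4rpos : (0:ℝ) < 4 ^ r := Real.rpow_pos_of_pos (by norm_num) _
  have hrrpos : (0:ℝ) < (2 * r) ^ r := Real.rpow_pos_of_pos (by linarith) _
  have h1M : (0:ℝ) < 1 + M := by linarith
  set C₂ : ℝ := 2 ^ (2 * r) * (1 + M) * ((Real.sqrt (2 * Real.pi))⁻¹ * 4 ^ r * 2) with hC₂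
  set C₁ : ℝ := C₂ * (2 * (2 * r) ^ r) with hC₁
  have hC₂pos : 0 < C₂ := by
    apply mul_pos (mul_pos h2rpos h1M)
    positivity
  have hC₁pos : 0 < C₁ := by
    apply mul_pos hC₂pos
    positivity
  refine ⟨C₁, C₂, hC₁pos, hC₂pos, ?_⟩
  intro z hz ρ hρ
  have hz0 : (0:ℝ) < z := by linarith
  obtain ⟨hρ1, hρ2⟩ := hρ
  have hρabs : |ρ| ≤ 1 := abs_le.mpr ⟨hρ1, hρ2⟩
  have hsnn : 0 ≤ Real.sqrt (1 - ρ ^ 2) := Real.sqrt_nonneg _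
  have hs1 : Real.sqrt (1 - ρ ^ 2) ≤ 1 := by
    have h := Real.sqrt_le_sqrt (show (1:ℝ) - ρ ^ 2 ≤ 1 by nlinarith)
    rwa [Real.sqrt_one] at h
  set S : Set ℝ := {x : ℝ | x ^ 2 / 2 > z} with hSdef
  have hS : MeasurableSet S := measurableSet_lt measurable_const (by fun_prop)
  have hTeq : {p : ℝ × ℝ | p.1 ^ 2 / 2 > z} = S ×ˢ (Set.univ : Set ℝ) := by
    ext ⟨x, y⟩
    simp [hSdef, Set.mem_prod]
  -- pointwise bound
  have hpb : ∀ p : ℝ × ℝ, |ρ * p.1 + Real.sqrt (1 - ρ ^ 2) * p.2| ^ (2 * r)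
      ≤ 2 ^ (2 * r) * (|p.1| ^ (2 * r) + |p.2| ^ (2 * r)) := by
    intro ⟨x, y⟩
    have htri : |ρ * x + Real.sqrt (1 - ρ ^ 2) * y| ≤ |x| + |y| := by
      calc |ρ * x + Real.sqrt (1 - ρ ^ 2) * y| ≤ |ρ * x| + |Real.sqrt (1 - ρ ^ 2) * y| :=
            abs_add_le _ _
        _ ≤ |x| + |y| := by
            rw [abs_mul, abs_mul, abs_of_nonneg hsnn]
            have h1 : |ρ| * |x| ≤ 1 * |x| := mul_le_mul_of_nonneg_right hρabs (abs_nonneg x)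
            have h2 : Real.sqrt (1 - ρ ^ 2) * |y| ≤ 1 * |y| :=
              mul_le_mul_of_nonneg_right hs1 (abs_nonneg y)
            simp only [one_mul] at h1 h2
            linarith
    calc |ρ * x + Real.sqrt (1 - ρ ^ 2) * y| ^ (2 * r) ≤ (|x| + |y|) ^ (2 * r) :=
          Real.rpow_le_rpow (abs_nonneg _) htri (by positivity)
      _ ≤ 2 ^ (2 * r) * (|x| ^ (2 * r) + |y| ^ (2 * r)) :=
          aux_add_rpow (by positivity) (abs_nonneg x) (abs_nonneg y)
  -- integrability of the bound on the product
  have i1 : Integrable (fun p : ℝ × ℝ => |p.1| ^ (2 * r)) (γ.prod γ) := by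
    have h := hM_int.mul_prod (integrable_const (1:ℝ) : Integrable _ γ)
    refine h.congr (ae_of_all _ fun p => ?_)
    simp
  have i2 : Integrable (fun p : ℝ × ℝ => |p.2| ^ (2 * r)) (γ.prod γ) := by
    have h := (integrable_const (1:ℝ) : Integrable _ γ).mul_prod hM_int
    refine h.congr (ae_of_all _ fun p => ?_)
    simp
  have hG_int : Integrable (fun p : ℝ × ℝ =>
      2 ^ (2 * r) * (|p.1| ^ (2 * r) + |p.2| ^ (2 * r))) (γ.prod γ) :=
    (i1.add i2).const_mul _
  -- step 1 : Qr ≤ ∫ bound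
  have step1 : Qr r ρ z ≤ ∫ p in {p : ℝ × ℝ | p.1 ^ 2 / 2 > z},
      2 ^ (2 * r) * (|p.1| ^ (2 * r) + |p.2| ^ (2 * r)) ∂(γ.prod γ) := by
    refine integral_mono_of_nonneg (ae_of_all _ fun p => ?_) hG_int.integrableOn
      (ae_of_all _ fun p => hpb p)
    exact Real.rpow_nonneg (abs_nonneg _) _
  -- step 2 : compute the bound integral
  set A : ℝ := ∫ x in S, |x| ^ (2 * r) ∂γ with hA
  set B : ℝ := ∫ x in S, (1:ℝ) ∂γ with hB
  have compute1 : ∫ p in {p : ℝ × ℝ | p.1 ^ 2 / 2 > z}, |p.1| ^ (2 * r) ∂(γ.prod γ)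
      = A := by
    rw [hTeq]
    calc ∫ p in S ×ˢ (Set.univ : Set ℝ), |p.1| ^ (2 * r) ∂(γ.prod γ)
        = ∫ p in S ×ˢ (Set.univ : Set ℝ), |p.1| ^ (2 * r) * 1 ∂(γ.prod γ) := by simp
      _ = (∫ x in S, |x| ^ (2 * r) ∂γ) * ∫ y in (Set.univ : Set ℝ), (1:ℝ) ∂γ :=
          setIntegral_prod_mul (fun x => |x| ^ (2 * r)) (fun _ => (1:ℝ)) S Set.univ
      _ = A := by
          rw [Measure.restrict_univ]
          simp [hγ, hA]
  have compute2 : ∫ p in {p : ℝ × ℝ | p.1 ^ 2 / 2 > z}, |p.2| ^ (2 * r) ∂(γ.prod γ)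
      = B * M := by
    rw [hTeq]
    calc ∫ p in S ×ˢ (Set.univ : Set ℝ), |p.2| ^ (2 * r) ∂(γ.prod γ)
        = ∫ p in S ×ˢ (Set.univ : Set ℝ), 1 * |p.2| ^ (2 * r) ∂(γ.prod γ) := by simp
      _ = (∫ x in S, (1:ℝ) ∂γ) * ∫ y in (Set.univ : Set ℝ), |y| ^ (2 * r) ∂γ :=
          setIntegral_prod_mul (fun _ => (1:ℝ)) (fun y => |y| ^ (2 * r)) S Set.univ
      _ = B * M := by rw [Measure.restrict_univ]
  have hsplit : ∫ p in {p : ℝ × ℝ | p.1 ^ 2 / 2 > z},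
      2 ^ (2 * r) * (|p.1| ^ (2 * r) + |p.2| ^ (2 * r)) ∂(γ.prod γ)
      = 2 ^ (2 * r) * (A + B * M) := by
    rw [integral_const_mul, integral_add i1.integrableOn i2.integrableOn,
      compute1, compute2]
  -- step 3 : B ≤ A
  have hBA : B ≤ A := by
    refine setIntegral_mono_on (integrable_const _).integrableOn hM_int.integrableOn hS
      (fun x hx => ?_)
    have hxS : z < x ^ 2 / 2 := hx
    have h1x : 1 ≤ |x| := by nlinarith [sq_abs x, abs_nonneg x]
    calc (1:ℝ) = 1 ^ (2 * r) := (Real.one_rpow _).symm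
      _ ≤ |x| ^ (2 * r) := Real.rpow_le_rpow zero_le_one h1x (by positivity)
  have hA0 : 0 ≤ A := integral_nonneg fun x => Real.rpow_nonneg (abs_nonneg x) _
  -- step 4 : tail bound
  have htail := aux_tail r hr hz
  -- assemble
  have hzr : (0:ℝ) ≤ z ^ r := Real.rpow_nonneg hz0.le r
  have hsqz : 0 < Real.sqrt z := Real.sqrt_pos.mpr hz0
  have hsq2z : 0 < Real.sqrt (2 * z) := Real.sqrt_pos.mpr (by linarith)
  have hzpow : z ^ (-(1/2 : ℝ)) = (Real.sqrt z)⁻¹ := by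
    rw [Real.rpow_neg hz0.le, Real.sqrt_eq_rpow]
  have hinv : (Real.sqrt (2 * z))⁻¹ ≤ z ^ (-(1/2 : ℝ)) := by
    rw [hzpow]
    exact inv_anti₀ hsqz (Real.sqrt_le_sqrt (by linarith))
  calc Qr r ρ z ≤ 2 ^ (2 * r) * (A + B * M) := by rw [← hsplit]; exact step1
    _ ≤ 2 ^ (2 * r) * ((1 + M) * A) := by
        have : B * M ≤ A * M := mul_le_mul_of_nonneg_right hBA hM0
        nlinarith
    _ ≤ 2 ^ (2 * r) * ((1 + M) * ((Real.sqrt (2 * Real.pi))⁻¹ * 4 ^ r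
          * (2 * (z ^ r + 2 * (2 * r) ^ r)) * (Real.sqrt (2 * z))⁻¹ * Real.exp (-z))) := by
        have h := mul_le_mul_of_nonneg_left htail h1M.le
        exact mul_le_mul_of_nonneg_left h h2rpos.le
    _ = (C₁ + C₂ * z ^ r) * ((Real.sqrt (2 * z))⁻¹ * Real.exp (-z)) := by
        rw [hC₁, hC₂]; ring
    _ ≤ (C₁ + C₂ * z ^ r) * (z ^ (-(1/2 : ℝ)) * Real.exp (-z)) := by
        have hc : 0 ≤ C₁ + C₂ * z ^ r := by positivity
        apply mul_le_mul_of_nonneg_left _ hc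
        exact mul_le_mul_of_nonneg_right hinv (Real.exp_nonneg _)
    _ = (C₁ + C₂ * z ^ r) * z ^ (-(1/2 : ℝ)) * Real.exp (-z) := by ring
end

section
/- With Q_r(ρ, z) = E[|ξ₁|^{2r} 1(ξ₂²/2 > z)] for a centered unit-variance Gaussian pair with correlation ρ, for any r > 0 and z ≥ 1 there exists C₃(r) > 0 such that inf_ρ Q_r(ρ, z) ≥ C₃(r) z^{-1/2} e^{-z}. -/
open MeasureTheory ProbabilityTheory
open scoped NNReal

namespace QrAux

open Real Set

lemma int_abs_rpow_exp {s : ℝ} (hs : -1 < s) :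
    Integrable (fun x : ℝ => |x| ^ s * Real.exp (-(1/2) * x ^ 2)) := by
  have h := integrableOn_rpow_mul_exp_neg_mul_sq (b := 1/2) (by norm_num) hs
  have h' : IntegrableOn (fun x : ℝ => |x| ^ s * Real.exp (-(1/2) * x ^ 2)) (Set.Ioi 0) :=
    h.congr_fun (fun x hx => by rw [abs_of_pos hx]) measurableSet_Ioi
  rw [← integrableOn_univ, ← Set.Iio_union_Ici (a := (0:ℝ)), integrableOn_union,
    integrableOn_Ici_iff_integrableOn_Ioi]
  refine ⟨?_, h'⟩
  rw [← (Measure.measurePreserving_neg (volume : Measure ℝ)).integrableOn_comp_preimage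
      (Homeomorph.neg ℝ).measurableEmbedding]
  simp only [Function.comp_def, abs_neg, neg_sq, neg_preimage, neg_Iio, neg_neg, neg_zero]
  exact h'

lemma int_abs_rpow_gauss {s : ℝ} (hs : -1 < s) :
    Integrable (fun x : ℝ => |x| ^ s) (gaussianReal 0 1) := by
  rw [gaussianReal_of_var_ne_zero 0 one_ne_zero,
    integrable_withDensity_iff (measurable_gaussianPDF 0 1)
      (ae_of_all _ fun x => ENNReal.ofReal_lt_top)]
  have heq : (fun x : ℝ => |x| ^ s * (gaussianPDF 0 1 x).toReal)
      = fun x => (Real.sqrt (2 * π))⁻¹ * (|x| ^ s * Real.exp (-(1/2) * x ^ 2)) := by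
    funext x
    rw [gaussianPDF_def, ENNReal.toReal_ofReal (gaussianPDFReal_nonneg _ _ _), gaussianPDFReal]
    push_cast
    rw [show -(x - 0) ^ 2 / (2 * 1) = -(1/2) * x ^ 2 by ring]
    ring
  rw [heq]
  exact (int_abs_rpow_exp hs).const_mul _

lemma int_comp_fst {f : ℝ → ℝ} (hm : Measurable f) (hf : Integrable f (gaussianReal 0 1)) :
    Integrable (fun p : ℝ × ℝ => f p.1) ((gaussianReal 0 1).prod (gaussianReal 0 1)) := by
  have hmap : ((gaussianReal 0 1).prod (gaussianReal 0 1)).map Prod.fst = gaussianReal 0 1 :=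
    Measure.fst_prod
  have : Integrable f (((gaussianReal 0 1).prod (gaussianReal 0 1)).map Prod.fst) := by
    rwa [hmap]
  exact (integrable_map_measure hm.aestronglyMeasurable measurable_fst.aemeasurable).mp this

lemma int_comp_snd {f : ℝ → ℝ} (hm : Measurable f) (hf : Integrable f (gaussianReal 0 1)) :
    Integrable (fun p : ℝ × ℝ => f p.2) ((gaussianReal 0 1).prod (gaussianReal 0 1)) := by
  have hmap : ((gaussianReal 0 1).prod (gaussianReal 0 1)).map Prod.snd = gaussianReal 0 1 :=
    Measure.snd_prod
  have : Integrable f (((gaussianReal 0 1).prod (gaussianReal 0 1)).map Prod.snd) := by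
    rwa [hmap]
  exact (integrable_map_measure hm.aestronglyMeasurable measurable_snd.aemeasurable).mp this

lemma int_main (s ρ c : ℝ) (hs : 0 < s) (hρ : |ρ| ≤ 1) (hc : |c| ≤ 1) :
    Integrable (fun p : ℝ × ℝ => |ρ * p.1 + c * p.2| ^ s)
      ((gaussianReal 0 1).prod (gaussianReal 0 1)) := by
  have hmeas : Measurable (fun x : ℝ => |x| ^ s) :=
    (continuous_abs.rpow_const fun x => Or.inr hs.le).measurable
  have hgauss : Integrable (fun x : ℝ => |x| ^ s) (gaussianReal 0 1) :=
    int_abs_rpow_gauss (by linarith)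
  have hg : Integrable (fun p : ℝ × ℝ => 2 ^ s * (|p.1| ^ s + |p.2| ^ s))
      ((gaussianReal 0 1).prod (gaussianReal 0 1)) :=
    ((int_comp_fst hmeas hgauss).add (int_comp_snd hmeas hgauss)).const_mul _
  refine hg.mono' ?_ (ae_of_all _ fun p => ?_)
  · exact ((((continuous_const.mul continuous_fst).add
      (continuous_const.mul continuous_snd)).abs.rpow_const
      fun x => Or.inr hs.le)).measurable.aestronglyMeasurable
  · rw [Real.norm_eq_abs, abs_of_nonneg (Real.rpow_nonneg (abs_nonneg _) _)]
    set x := p.1; set y := p.2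
    have h1 : |ρ * x + c * y| ≤ |x| + |y| := by
      have e1 : |ρ * x| ≤ |x| := by
        rw [abs_mul]; nlinarith [abs_nonneg x, abs_nonneg ρ]
      have e2 : |c * y| ≤ |y| := by
        rw [abs_mul]; nlinarith [abs_nonneg y, abs_nonneg c]
      calc |ρ * x + c * y| ≤ |ρ * x| + |c * y| := abs_add_le _ _
        _ ≤ |x| + |y| := add_le_add e1 e2
    have h2 : |x| + |y| ≤ 2 * max |x| |y| := by
      rcases max_cases |x| |y| with ⟨h, h'⟩ | ⟨h, h'⟩ <;> rw [h] <;> linarith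
    calc |ρ * x + c * y| ^ s ≤ (2 * max |x| |y|) ^ s :=
          Real.rpow_le_rpow (abs_nonneg _) (h1.trans h2) hs.le
      _ = 2 ^ s * (max |x| |y|) ^ s :=
          Real.mul_rpow (by norm_num) (le_max_of_le_left (abs_nonneg _))
      _ ≤ 2 ^ s * (|x| ^ s + |y| ^ s) := by
          gcongr 2 ^ s * ?_
          rcases max_cases |x| |y| with ⟨h, _⟩ | ⟨h, _⟩ <;> rw [h] <;>
            nlinarith [Real.rpow_nonneg (abs_nonneg x) s, Real.rpow_nonneg (abs_nonneg y) s]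

lemma gauss_Icc_ge {a b m : ℝ} (hab : a ≤ b) (hm : ∀ x ∈ Set.Icc a b, x ^ 2 ≤ m) :
    ENNReal.ofReal ((b - a) * ((Real.sqrt (2 * π))⁻¹ * Real.exp (-m / 2)))
      ≤ gaussianReal 0 1 (Set.Icc a b) := by
  rw [gaussianReal_apply_eq_integral 0 one_ne_zero]
  apply ENNReal.ofReal_le_ofReal
  have key := setIntegral_ge_of_const_le (μ := volume) (s := Set.Icc a b)
    (c := (Real.sqrt (2 * π))⁻¹ * Real.exp (-m / 2)) measurableSet_Icc
    (by rw [Real.volume_Icc]; exact ENNReal.ofReal_ne_top) ?_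
    ((integrable_gaussianPDFReal 0 1).integrableOn)
  · rw [measureReal_def, Real.volume_Icc, ENNReal.toReal_ofReal (by linarith), smul_eq_mul] at key
    linarith [key]
  · intro x hx
    rw [gaussianPDFReal]
    push_cast
    simp only [mul_one, sub_zero]
    gcongr
    exact hm x hx

lemma sq_le_one_of {a : ℝ} (h1 : -1 ≤ a) (h2 : a ≤ 1) : a ^ 2 ≤ 1 := by nlinarith

lemma le_one_of_sq {c : ℝ} (hc0 : 0 ≤ c) (h : c ^ 2 ≤ 1) : c ≤ 1 := by nlinarith

lemma sqrt2_lt_two : Real.sqrt 2 < 2 := by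
  nlinarith [Real.sq_sqrt (by norm_num : (0:ℝ) ≤ 2), Real.sqrt_nonneg 2]

lemma sq_le_four_pos {x : ℝ} (h1 : Real.sqrt 2 ≤ x) (h2 : x ≤ 2) : x ^ 2 ≤ 4 := by
  have h0 : (0:ℝ) ≤ x := le_trans (Real.sqrt_nonneg 2) h1
  nlinarith

lemma sq_le_four_neg {x : ℝ} (h1 : (-2:ℝ) ≤ x) (h2 : x ≤ -(Real.sqrt 2)) : x ^ 2 ≤ 4 := by
  have h0 : x ≤ 0 := le_trans h2 (neg_nonpos.mpr (Real.sqrt_nonneg 2))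
  nlinarith

lemma aux_sq_le {t δ z x : ℝ} (ht0 : 0 ≤ t) (hδ0 : 0 < δ) (hδ4 : δ ≤ 1/4)
    (ht2 : t ^ 2 = 2 * z) (htδ : t * δ = Real.sqrt 2 / 4)
    (h1 : t + δ ≤ x) (h2 : x ≤ t + 2 * δ) : x ^ 2 ≤ 2 * z + Real.sqrt 2 + 1/4 := by
  nlinarith [mul_nonneg (by linarith : (0:ℝ) ≤ t + 2*δ - x) (by linarith : (0:ℝ) ≤ t + 2*δ + x),
    mul_nonneg hδ0.le (by linarith : (0:ℝ) ≤ 1/4 - δ)]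

lemma aux_gt {t δ z x : ℝ} (ht0 : 0 ≤ t) (hδ0 : 0 < δ) (ht2 : t ^ 2 = 2 * z)
    (h1 : t + δ ≤ x) : z < x ^ 2 / 2 := by
  nlinarith [mul_nonneg (by linarith : (0:ℝ) ≤ x - t - δ) (by linarith : (0:ℝ) ≤ x + t + δ),
    mul_pos hδ0 hδ0, mul_nonneg ht0 hδ0.le]

lemma aux_ge2 {t δ z x : ℝ} (ht0 : 0 ≤ t) (hδ0 : 0 < δ) (ht2 : t ^ 2 = 2 * z)
    (h1 : t + δ ≤ x) : 2 * z ≤ x ^ 2 := by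
  have := aux_gt ht0 hδ0 ht2 h1; linarith


lemma aux_one_le {ρ c x y z : ℝ} (hz : 1 ≤ z) (hρ : 0 ≤ ρ) (hc : 0 ≤ c)
    (hsum : ρ ^ 2 + c ^ 2 = 1) (hx2 : 2 * z ≤ x ^ 2) (hx0 : 0 ≤ x)
    (hy1 : Real.sqrt 2 ≤ y) (hy2 : y ≤ 2) : 1 ≤ ρ * x + c * y := by
  have hs22 : (Real.sqrt 2) ^ 2 = 2 := Real.sq_sqrt (by norm_num)
  have hy0 : (0:ℝ) ≤ y := le_trans (Real.sqrt_nonneg 2) hy1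
  have hy2' : 2 ≤ y ^ 2 := by
    nlinarith [mul_nonneg (by linarith : (0:ℝ) ≤ y - Real.sqrt 2)
      (by linarith [Real.sqrt_nonneg 2] : (0:ℝ) ≤ y + Real.sqrt 2)]
  have hρx : 0 ≤ ρ * x := mul_nonneg hρ hx0
  have hcy : 0 ≤ c * y := mul_nonneg hc hy0
  have hz0 : (0:ℝ) ≤ z := by linarith
  rcases le_or_gt (1/2) (ρ ^ 2) with hh | hh
  · have h1 : 1 ≤ (ρ * x) ^ 2 := by
      nlinarith [mul_nonneg (by linarith : (0:ℝ) ≤ ρ^2 - 1/2) (by linarith : (0:ℝ) ≤ x^2 - 2*z),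
        mul_nonneg hz0 (by linarith : (0:ℝ) ≤ ρ^2 - 1/2)]
    nlinarith [h1, hρx, hcy]
  · have hcc : 1/2 ≤ c ^ 2 := by linarith
    have h1 : 1 ≤ (c * y) ^ 2 := by
      nlinarith [mul_nonneg (by linarith : (0:ℝ) ≤ c^2 - 1/2) (by linarith : (0:ℝ) ≤ y^2 - 2)]
    nlinarith [h1, hρx, hcy]

end QrAux

set_option maxHeartbeats 1000000 in
/-- Uniform lower bound on `Q_r(ρ, z)`: for `r > 0` there exists `C₃(r) > 0` such that for
every `z ≥ 1` and every correlation `ρ ∈ [-1, 1]`, `C_3 z^{-1/2} e^{-z} ≤ Q_r(ρ, z)`. -/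
theorem Qr_lower_bound (r : ℝ) (hr : 0 < r) :
    ∃ C₃ : ℝ, 0 < C₃ ∧
      ∀ z : ℝ, 1 ≤ z → ∀ ρ : ℝ, ρ ∈ Set.Icc (-1 : ℝ) 1 →
        C₃ * z ^ (-(1 / 2 : ℝ)) * Real.exp (-z) ≤ Qr r ρ z := by
  classical
  set K : ℝ := (Real.sqrt (2 * Real.pi))⁻¹ with hKdef
  have hKpos : 0 < K := by
    rw [hKdef]
    exact inv_pos.mpr (Real.sqrt_pos.mpr (by positivity))
  have hs22 : (Real.sqrt 2) ^ 2 = 2 := Real.sq_sqrt (by norm_num)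
  have hs2nn : (0:ℝ) ≤ Real.sqrt 2 := Real.sqrt_nonneg 2
  have hs2lt : Real.sqrt 2 < 2 := QrAux.sqrt2_lt_two
  set B : ℝ := (2 - Real.sqrt 2) * (K * Real.exp (-(4:ℝ) / 2)) with hBdef
  have hBpos : 0 < B := by
    rw [hBdef]
    exact mul_pos (by linarith) (mul_pos hKpos (Real.exp_pos _))
  refine ⟨(1/4) * K * Real.exp (-(Real.sqrt 2 + 1/4) / 2) * B, by positivity, ?_⟩
  intro z hz ρ hρmem
  obtain ⟨hρl, hρu⟩ := hρmem
  have hρabs : |ρ| ≤ 1 := abs_le.mpr ⟨hρl, hρu⟩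
  have hz0 : (0:ℝ) < z := lt_of_lt_of_le one_pos hz
  set c : ℝ := Real.sqrt (1 - ρ ^ 2) with hcdef
  have hc0 : 0 ≤ c := Real.sqrt_nonneg _
  have hc2 : c ^ 2 = 1 - ρ ^ 2 := Real.sq_sqrt (by have := QrAux.sq_le_one_of hρl hρu; linarith)
  have hcabs : |c| ≤ 1 := by
    rw [abs_of_nonneg hc0]
    exact QrAux.le_one_of_sq hc0 (by rw [hc2]; linarith [sq_nonneg ρ])
  set sz : ℝ := Real.sqrt z with hszdef
  have hsz1 : 1 ≤ sz := by
    rw [hszdef, show (1:ℝ) = Real.sqrt 1 from Real.sqrt_one.symm]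
    exact Real.sqrt_le_sqrt hz
  have hsz0 : 0 < sz := lt_of_lt_of_le one_pos hsz1
  have hzr : z ^ (-(1/2 : ℝ)) = sz⁻¹ := by
    rw [Real.rpow_neg hz0.le, hszdef, Real.sqrt_eq_rpow]
  set δ : ℝ := sz⁻¹ / 4 with hδdef
  have hδ0 : 0 < δ := by positivity
  have hδ4 : δ ≤ 1/4 := by
    rw [hδdef]
    have : sz⁻¹ ≤ 1 := by
      rw [inv_le_one_iff₀]; right; exact hsz1
    linarith
  set t : ℝ := Real.sqrt (2 * z) with htdef
  have ht0 : 0 ≤ t := Real.sqrt_nonneg _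
  have ht2 : t ^ 2 = 2 * z := Real.sq_sqrt (by positivity)
  have htsz : t = Real.sqrt 2 * sz := by
    rw [htdef, hszdef, Real.sqrt_mul (by norm_num)]
  have htδ : t * δ = Real.sqrt 2 / 4 := by
    rw [htsz, hδdef]
    field_simp
  set a : ℝ := t + δ with hadef
  set b : ℝ := t + 2 * δ with hbdef
  set m : ℝ := 2 * z + Real.sqrt 2 + 1/4 with hmdef
  have hab : a ≤ b := by rw [hadef, hbdef]; linarith
  have hm1 : ∀ x ∈ Set.Icc a b, x ^ 2 ≤ m := by
    intro x hx
    obtain ⟨h1, h2⟩ := hx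
    rw [hadef] at h1; rw [hbdef] at h2; rw [hmdef]
    exact QrAux.aux_sq_le ht0 hδ0 hδ4 ht2 htδ h1 h2
  set I₂ : Set ℝ := if 0 ≤ ρ then Set.Icc (Real.sqrt 2) 2 else Set.Icc (-2) (-(Real.sqrt 2))
    with hI₂def
  have hI₂meas : MeasurableSet I₂ := by
    rw [hI₂def]; split <;> exact measurableSet_Icc
  have hI₂m : ENNReal.ofReal B ≤ gaussianReal 0 1 I₂ := by
    rw [hBdef]
    by_cases h : 0 ≤ ρ
    · rw [hI₂def, if_pos h]
      have := QrAux.gauss_Icc_ge (a := Real.sqrt 2) (b := 2) (m := 4) hs2lt.le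
        (fun x hx => QrAux.sq_le_four_pos hx.1 hx.2)
      rw [hKdef]
      exact this
    · rw [hI₂def, if_neg h]
      have := QrAux.gauss_Icc_ge (a := -2) (b := -(Real.sqrt 2)) (m := 4)
        (by linarith) (fun x hx => QrAux.sq_le_four_neg hx.1 hx.2)
      rw [show (2 - Real.sqrt 2) = -(Real.sqrt 2) - (-2) by ring, hKdef]
      exact this
  have hI₁m : ENNReal.ofReal (δ * (K * Real.exp (-m / 2))) ≤ gaussianReal 0 1 (Set.Icc a b) := by
    have := QrAux.gauss_Icc_ge hab hm1
    rw [show b - a = δ by rw [hadef, hbdef]; ring] at this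
    exact this
  -- pointwise lower bound on the integrand over the product rectangle
  have hpt : ∀ p : ℝ × ℝ, p ∈ Set.Icc a b ×ˢ I₂ → 1 ≤ |ρ * p.1 + c * p.2| := by
    rintro ⟨x, y⟩ ⟨hpx, hpy⟩
    simp only [Set.mem_Icc] at hpx
    obtain ⟨hx1, hx2⟩ := hpx
    rw [hadef] at hx1
    have hx0 : (0:ℝ) ≤ x := by linarith
    have hx2z : 2 * z ≤ x ^ 2 := QrAux.aux_ge2 ht0 hδ0 ht2 hx1
    have hsum : ρ ^ 2 + c ^ 2 = 1 := by rw [hc2]; ring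
    by_cases h : 0 ≤ ρ
    · rw [hI₂def, if_pos h, Set.mem_Icc] at hpy
      obtain ⟨hy1, hy2⟩ := hpy
      have hy0 : 0 ≤ y := le_trans hs2nn hy1
      have key := QrAux.aux_one_le hz h hc0 hsum hx2z hx0 hy1 hy2
      have hρx : 0 ≤ ρ * x := mul_nonneg h hx0
      have hcy : 0 ≤ c * y := mul_nonneg hc0 hy0
      rw [abs_of_nonneg (by linarith)]
      exact key
    · rw [hI₂def, if_neg h, Set.mem_Icc] at hpy
      obtain ⟨hy1, hy2⟩ := hpy
      push_neg at h
      have hy0 : y ≤ 0 := by linarith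
      have hsum' : (-ρ) ^ 2 + c ^ 2 = 1 := by rw [neg_pow]; simpa using hsum
      have key := QrAux.aux_one_le hz (by linarith : (0:ℝ) ≤ -ρ) hc0 hsum' hx2z hx0
        (by linarith : Real.sqrt 2 ≤ -y) (by linarith : -y ≤ 2)
      have hρx : ρ * x ≤ 0 := mul_nonpos_of_nonpos_of_nonneg h.le hx0
      have hcy : c * y ≤ 0 := mul_nonpos_of_nonneg_of_nonpos hc0 hy0
      rw [abs_of_nonpos (by linarith)]
      calc (1:ℝ) ≤ -ρ * x + c * -y := key
        _ = -(ρ * x + c * y) := by ring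
  -- now the integral chain
  set μ2 : Measure (ℝ × ℝ) := (gaussianReal 0 1).prod (gaussianReal 0 1) with hμ2
  set f : ℝ × ℝ → ℝ := fun p => |ρ * p.1 + c * p.2| ^ (2 * r) with hfdef
  have hfi : Integrable f μ2 := QrAux.int_main (2 * r) ρ c (by linarith) hρabs hcabs
  set S : Set (ℝ × ℝ) := Set.Icc a b ×ˢ I₂ with hSdef
  have hSmeas : MeasurableSet S := measurableSet_Icc.prod hI₂meas
  have hST : S ⊆ {p : ℝ × ℝ | p.1 ^ 2 / 2 > z} := by
    rintro ⟨x, y⟩ ⟨hpx, _⟩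
    simp only [Set.mem_Icc] at hpx
    obtain ⟨hx1, hx2⟩ := hpx
    rw [hadef] at hx1
    simp only [Set.mem_setOf_eq, gt_iff_lt]
    exact QrAux.aux_gt ht0 hδ0 ht2 hx1
  have step1 : ∫ p in S, f p ∂μ2 ≤ ∫ p in {p : ℝ × ℝ | p.1 ^ 2 / 2 > z}, f p ∂μ2 := by
    apply setIntegral_mono_set hfi.integrableOn
    · exact ae_of_all _ fun p => Real.rpow_nonneg (abs_nonneg _) _
    · exact HasSubset.Subset.eventuallyLE hST
  have step2 : 1 * (μ2 S).toReal ≤ ∫ p in S, f p ∂μ2 := by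
    rw [mul_comm, ← smul_eq_mul, ← measureReal_def]
    apply setIntegral_ge_of_const_le hSmeas (measure_ne_top μ2 S)
    · intro p hp
      rw [hfdef]
      calc (1:ℝ) = 1 ^ (2 * r) := (Real.one_rpow _).symm
        _ ≤ |ρ * p.1 + c * p.2| ^ (2 * r) :=
          Real.rpow_le_rpow zero_le_one (hpt p hp) (by linarith)
    · exact hfi.integrableOn
  have step3 : δ * (K * Real.exp (-m / 2)) * B ≤ (μ2 S).toReal := by
    have hprod : μ2 S = gaussianReal 0 1 (Set.Icc a b) * gaussianReal 0 1 I₂ := by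
      rw [hμ2, hSdef, Measure.prod_prod]
    have hge : ENNReal.ofReal (δ * (K * Real.exp (-m / 2)) * B) ≤ μ2 S := by
      rw [hprod, ENNReal.ofReal_mul (by positivity)]
      exact mul_le_mul' hI₁m hI₂m
    calc δ * (K * Real.exp (-m / 2)) * B
        = (ENNReal.ofReal (δ * (K * Real.exp (-m / 2)) * B)).toReal := by
          rw [ENNReal.toReal_ofReal (by positivity)]
      _ ≤ (μ2 S).toReal := ENNReal.toReal_mono (measure_ne_top μ2 S) hge
  have harith : (1/4) * K * Real.exp (-(Real.sqrt 2 + 1/4) / 2) * B * z ^ (-(1/2 : ℝ))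
      * Real.exp (-z) = δ * (K * Real.exp (-m / 2)) * B := by
    rw [hzr, hδdef, hmdef, show -(2 * z + Real.sqrt 2 + 1/4) / 2
      = -z + (-(Real.sqrt 2 + 1/4) / 2) by ring, Real.exp_add]
    ring
  have hQr : Qr r ρ z = ∫ p in {p : ℝ × ℝ | p.1 ^ 2 / 2 > z}, f p ∂μ2 := rfl
  rw [hQr, harith]
  calc δ * (K * Real.exp (-m / 2)) * B ≤ (μ2 S).toReal := step3
    _ = 1 * (μ2 S).toReal := (one_mul _).symm
    _ ≤ ∫ p in S, f p ∂μ2 := step2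
    _ ≤ ∫ p in {p : ℝ × ℝ | p.1 ^ 2 / 2 > z}, f p ∂μ2 := step1
end
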